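/- Let A be a commutative differential algebra with D commuting derivations ∂_1, ..., ∂_D (e.g. the algebra of differential polynomials in D independent variables). Then for any local functional F = ∫ f arising from f ∈ A, the variational derivative δF/δu^α := Σ_S (−1)^{|S|} ∂^S (∂f/∂u^{α,S}) annihilates total derivatives: (δ/δu^α) ∘ ∂_{x^i} = 0 for each i = 1, ..., D. Consequently δF/δu^α is independent of the choice of density f modulo Σ_i ∂_{x^i} A. -/

import Mathlib

noncomputable section

/-- Jet variables `u^{α,S}` for `N` dependent and `D` independent variables. -/
abbrev JetVar (N D : ℕ) : Type := Fin N × (Fin D → ℕ)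

/-- The algebra of differential polynomials. -/
abbrev DiffPoly (N D : ℕ) : Type := MvPolynomial (JetVar N D) ℝ

/-- The total derivative `∂_{x^i} = ∑_{α,S} u^{α,S+ξ_i} ∂/∂u^{α,S}`: the unique
derivation with `∂_{x^i} u^{α,S} = u^{α,S+ξ_i}`. -/
def totalD (N D : ℕ) (i : Fin D) : Derivation ℝ (DiffPoly N D) (DiffPoly N D) :=
  MvPolynomial.mkDerivation ℝ (fun v : JetVar N D => MvPolynomial.X (v.1, v.2 + Pi.single i 1))

/-- The iterated total derivative `∂^S = ∂_{x^1}^{s_1} ⋯ ∂_{x^D}^{s_D}`. -/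
def totalDpow (N D : ℕ) (S : Fin D → ℕ) (f : DiffPoly N D) : DiffPoly N D :=
  (List.finRange D).foldr (fun i g => (fun a => totalD N D i a)^[S i] g) f

/-- The variational derivative `δf/δu^α = ∑_S (−1)^{|S|} ∂^S (∂f/∂u^{α,S})` (the
sum is finite: only the jet variables occurring in `f` contribute). -/
def varDer (N D : ℕ) (α : Fin N) (f : DiffPoly N D) : DiffPoly N D :=
  ∑ S ∈ f.vars.image Prod.snd,
    ((-1 : ℝ) ^ (∑ j, S j)) • totalDpow N D S (MvPolynomial.pderiv (α, S) f)

open MvPolynomial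

namespace Stmt16Aux

variable {N D : ℕ}

lemma totalD_X (i : Fin D) (v : JetVar N D) :
    totalD N D i (X v) = X (v.1, v.2 + Pi.single i 1) :=
  mkDerivation_X _ _ _

/-- Commutator of `∂/∂u^{α,S}` with the total derivative. -/
lemma bracket_eq (α : Fin N) (S : Fin D → ℕ) (i : Fin D) :
    ⁅(pderiv ((α, S) : JetVar N D) : Derivation ℝ (DiffPoly N D) (DiffPoly N D)),
      totalD N D i⁆ =
      if 0 < S i then pderiv ((α, S - Pi.single i 1) : JetVar N D) else 0 := by
  apply MvPolynomial.derivation_ext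
  rintro ⟨β, T⟩
  rw [Derivation.commutator_apply, totalD_X]
  rw [pderiv_X, pderiv_X]
  have hconst : totalD N D i (Pi.single (M := fun _ => DiffPoly N D) ((α, S) : JetVar N D) 1 (β, T)) = 0 := by
    rw [Pi.single_apply]
    split <;> simp
  rw [hconst, sub_zero]
  by_cases h1 : ((β, T + Pi.single i 1) : JetVar N D) = (α, S)
  · obtain ⟨hβ, hT⟩ := Prod.mk.injEq .. ▸ h1
    have hpos : 0 < S i := by
      rw [← hT]; simp
    have hTeq : T = S - Pi.single i 1 := by
      rw [← hT]; funext j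
      by_cases hj : j = i <;> simp [hj]
    rw [Pi.single_apply, if_pos h1, if_pos hpos, pderiv_X, Pi.single_apply,
      if_pos (by rw [hβ, hTeq])]
  · rw [Pi.single_apply, if_neg h1]
    by_cases hpos : 0 < S i
    · rw [if_pos hpos, pderiv_X, Pi.single_apply, if_neg]
      rintro h2
      obtain ⟨hβ, hT⟩ := Prod.mk.injEq .. ▸ h2
      apply h1
      refine Prod.ext hβ ?_
      funext j
      by_cases hj : j = i
      · subst hj; rw [hT]; simp; omega
      · rw [hT]; simp [hj]
    · rw [if_neg hpos]; rfl

lemma pderiv_totalD (α : Fin N) (S : Fin D → ℕ) (i : Fin D) (f : DiffPoly N D) :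
    pderiv ((α, S) : JetVar N D) (totalD N D i f) =
      totalD N D i (pderiv ((α, S) : JetVar N D) f) +
        (if 0 < S i then pderiv ((α, S - Pi.single i 1) : JetVar N D) f else 0) := by
  have h := DFunLike.congr_fun (bracket_eq α S i) f
  rw [Derivation.commutator_apply] at h
  have : pderiv ((α, S) : JetVar N D) (totalD N D i f)
      - totalD N D i (pderiv ((α, S) : JetVar N D) f)
      = (if 0 < S i then pderiv ((α, S - Pi.single i 1) : JetVar N D) f else 0) := by
    rw [h]; split <;> simp
  exact sub_eq_iff_eq_add'.mp this

lemma totalD_comm (i j : Fin D) (f : DiffPoly N D) :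
    totalD N D i (totalD N D j f) = totalD N D j (totalD N D i f) := by
  have h : ⁅totalD N D i, totalD N D j⁆ = (0 : Derivation ℝ (DiffPoly N D) (DiffPoly N D)) := by
    apply MvPolynomial.derivation_ext
    rintro ⟨β, T⟩
    rw [Derivation.commutator_apply, totalD_X, totalD_X, totalD_X, totalD_X]
    simp [add_right_comm]
  have h2 := DFunLike.congr_fun h f
  rw [Derivation.commutator_apply] at h2
  have h3 : (0 : Derivation ℝ (DiffPoly N D) (DiffPoly N D)) f = 0 := rfl
  rw [h3] at h2
  exact sub_eq_zero.mp h2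

lemma totalD_fcomm (i j : Fin D) :
    Function.Commute (fun a => totalD N D i a) (fun a => totalD N D j a) :=
  fun f => totalD_comm i j f

lemma iter_zero (i : Fin D) (n : ℕ) :
    (fun a => totalD N D i a)^[n] (0 : DiffPoly N D) = 0 := by
  induction n with
  | zero => rfl
  | succ n ih => rw [Function.iterate_succ_apply', ih]; simp

lemma iter_add (i : Fin D) (n : ℕ) (f g : DiffPoly N D) :
    (fun a => totalD N D i a)^[n] (f + g) =
      (fun a => totalD N D i a)^[n] f + (fun a => totalD N D i a)^[n] g := by
  induction n generalizing f g with
  | zero => rfl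
  | succ n ih => rw [Function.iterate_succ_apply, Function.iterate_succ_apply,
      Function.iterate_succ_apply]
                 show (fun a => totalD N D i a)^[n] (totalD N D i (f+g)) = _
                 rw [map_add]; exact ih _ _

lemma foldr_zero (L : List (Fin D)) (S : Fin D → ℕ) :
    L.foldr (fun i g => (fun a => totalD N D i a)^[S i] g) (0 : DiffPoly N D) = 0 := by
  induction L with
  | nil => rfl
  | cons j L ih => simp only [List.foldr_cons, ih, iter_zero]

lemma foldr_add (L : List (Fin D)) (S : Fin D → ℕ) (f g : DiffPoly N D) :
    L.foldr (fun i g => (fun a => totalD N D i a)^[S i] g) (f + g) =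
      L.foldr (fun i g => (fun a => totalD N D i a)^[S i] g) f +
      L.foldr (fun i g => (fun a => totalD N D i a)^[S i] g) g := by
  induction L generalizing f g with
  | nil => rfl
  | cons j L ih => simp only [List.foldr_cons, ih, iter_add]

lemma foldr_totalD (L : List (Fin D)) (S : Fin D → ℕ) (i : Fin D) (f : DiffPoly N D) :
    L.foldr (fun j g => (fun a => totalD N D j a)^[S j] g) (totalD N D i f) =
      totalD N D i (L.foldr (fun j g => (fun a => totalD N D j a)^[S j] g) f) := by
  induction L generalizing f with
  | nil => rfl
  | cons j L ih =>
      simp only [List.foldr_cons, ih]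
      exact ((totalD_fcomm j i).iterate_left (S j)) _

lemma foldr_add_single (L : List (Fin D)) (S : Fin D → ℕ) (i : Fin D) (f : DiffPoly N D) :
    L.foldr (fun j g => (fun a => totalD N D j a)^[(S + Pi.single i 1 : Fin D → ℕ) j] g) f =
      (fun a => totalD N D i a)^[L.count i]
        (L.foldr (fun j g => (fun a => totalD N D j a)^[S j] g) f) := by
  induction L with
  | nil => rfl
  | cons j L ih =>
      simp only [List.foldr_cons, ih]
      by_cases hj : j = i
      · subst hj
        have h1 : (S + Pi.single j 1 : Fin D → ℕ) j = S j + 1 := by simp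
        rw [h1, List.count_cons_self]
        rw [← Function.iterate_add_apply, ← Function.iterate_add_apply]
        have h2 : S j + 1 + L.count j = L.count j + 1 + S j := by omega
        rw [h2]
      · have h1 : (S + Pi.single i 1 : Fin D → ℕ) j = S j := by
          simp [Pi.single_eq_of_ne hj]
        rw [h1, List.count_cons_of_ne hj]
        exact (((totalD_fcomm j i).iterate_iterate (S j) (L.count i))) _

lemma totalDpow_add_single (S : Fin D → ℕ) (i : Fin D) (f : DiffPoly N D) :
    totalDpow N D (S + Pi.single i 1) f = totalD N D i (totalDpow N D S f) := by
  unfold totalDpow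
  rw [foldr_add_single]
  rw [List.count_eq_one_of_mem (List.nodup_finRange D) (List.mem_finRange i)]
  rfl

lemma totalDpow_totalD (S : Fin D → ℕ) (i : Fin D) (f : DiffPoly N D) :
    totalDpow N D S (totalD N D i f) = totalD N D i (totalDpow N D S f) :=
  foldr_totalD _ S i f

lemma totalDpow_zero (S : Fin D → ℕ) : totalDpow N D S (0 : DiffPoly N D) = 0 :=
  foldr_zero _ S

lemma totalDpow_add (S : Fin D → ℕ) (f g : DiffPoly N D) :
    totalDpow N D S (f + g) = totalDpow N D S f + totalDpow N D S g :=
  foldr_add _ S f g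

lemma varDer_subset (α : Fin N) (f : DiffPoly N D) {T : Finset (Fin D → ℕ)}
    (hT : f.vars.image Prod.snd ⊆ T) :
    varDer N D α f =
      ∑ S ∈ T, ((-1 : ℝ) ^ (∑ j, S j)) • totalDpow N D S (pderiv ((α, S) : JetVar N D) f) := by
  unfold varDer
  apply Finset.sum_subset hT
  intro S _ hS'
  have hz : pderiv ((α, S) : JetVar N D) f = 0 := by
    apply pderiv_eq_zero_of_notMem_vars
    intro hmem
    exact hS' (Finset.mem_image_of_mem Prod.snd hmem)
  rw [hz, totalDpow_zero, smul_zero]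

lemma sub_add_single (S : Fin D → ℕ) (i : Fin D) :
    (S + Pi.single i 1 : Fin D → ℕ) - Pi.single i 1 = S := by
  funext j
  by_cases hj : j = i <;> simp [hj]

lemma key (α : Fin N) (i : Fin D) (f : DiffPoly N D) :
    varDer N D α (totalD N D i f) = 0 := by
  classical
  set V : Finset (Fin D → ℕ) := f.vars.image Prod.snd with hV
  set W : Finset (Fin D → ℕ) := V.image (· + Pi.single i 1) with hW
  set T : Finset (Fin D → ℕ) :=
    ((totalD N D i f).vars.image Prod.snd) ∪ V ∪ W with hT
  have hVT : V ⊆ T := by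
    intro x hx; exact Finset.mem_union_left _ (Finset.mem_union_right _ hx)
  have hWT : W ⊆ T := fun x hx => Finset.mem_union_right _ hx
  rw [varDer_subset α _ (T := T)
    (fun x hx => Finset.mem_union_left _ (Finset.mem_union_left _ hx))]
  have hterm : ∀ S ∈ T,
      ((-1 : ℝ) ^ (∑ j, S j)) • totalDpow N D S (pderiv ((α, S) : JetVar N D) (totalD N D i f))
        = ((-1 : ℝ) ^ (∑ j, S j)) •
            totalDpow N D S (totalD N D i (pderiv ((α, S) : JetVar N D) f))
          + ((-1 : ℝ) ^ (∑ j, S j)) •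
            totalDpow N D S
              (if 0 < S i then pderiv ((α, S - Pi.single i 1) : JetVar N D) f else 0) := by
    intro S _
    rw [pderiv_totalD, totalDpow_add, smul_add]
  rw [Finset.sum_congr rfl hterm, Finset.sum_add_distrib]
  have hA : ∑ S ∈ T, ((-1 : ℝ) ^ (∑ j, S j)) •
        totalDpow N D S (totalD N D i (pderiv ((α, S) : JetVar N D) f))
      = ∑ S ∈ V, ((-1 : ℝ) ^ (∑ j, S j)) •
        totalDpow N D (S + Pi.single i 1) (pderiv ((α, S) : JetVar N D) f) := by
    rw [← Finset.sum_subset hVT]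
    · apply Finset.sum_congr rfl
      intro S _
      rw [totalDpow_add_single, ← totalDpow_totalD]
    · intro S _ hS'
      have hz : pderiv ((α, S) : JetVar N D) f = 0 := by
        apply pderiv_eq_zero_of_notMem_vars
        intro hmem
        exact hS' (Finset.mem_image_of_mem Prod.snd hmem)
      rw [hz, map_zero, totalDpow_zero, smul_zero]
  have hB : ∑ S ∈ T, ((-1 : ℝ) ^ (∑ j, S j)) •
        totalDpow N D S
          (if 0 < S i then pderiv ((α, S - Pi.single i 1) : JetVar N D) f else 0)
      = ∑ S ∈ V, (-((-1 : ℝ) ^ (∑ j, S j))) •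
        totalDpow N D (S + Pi.single i 1) (pderiv ((α, S) : JetVar N D) f) := by
    rw [← Finset.sum_subset hWT]
    · rw [hW, Finset.sum_image]
      · apply Finset.sum_congr rfl
        intro S _
        have hpos : 0 < (S + Pi.single i 1 : Fin D → ℕ) i := by simp
        rw [if_pos hpos, sub_add_single]
        have hsgn : (∑ j, (S + Pi.single i 1 : Fin D → ℕ) j) = (∑ j, S j) + 1 := by
          simp only [Pi.add_apply]
          rw [Finset.sum_add_distrib, Fintype.sum_pi_single']
        rw [hsgn, pow_succ]
        ring_nf
      · intro x _ y _ hxy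
        funext j
        have := congrFun hxy j
        simp only [Pi.add_apply] at this
        omega
    · intro S hS hS'
      by_cases hpos : 0 < S i
      · rw [if_pos hpos]
        have hz : pderiv ((α, S - Pi.single i 1) : JetVar N D) f = 0 := by
          apply pderiv_eq_zero_of_notMem_vars
          intro hmem
          apply hS'
          rw [hW]
          refine Finset.mem_image.mpr ⟨S - Pi.single i 1,
            Finset.mem_image_of_mem Prod.snd hmem, ?_⟩
          funext j
          by_cases hj : j = i
          · subst hj; simp; omega
          · simp [hj]
        rw [hz, totalDpow_zero, smul_zero]
      · rw [if_neg hpos, totalDpow_zero, smul_zero]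
  rw [hA, hB, ← Finset.sum_add_distrib]
  apply Finset.sum_eq_zero
  intro S _
  rw [neg_smul]
  exact add_neg_cancel _

lemma totalDpow_sum {ι : Type*} (S : Fin D → ℕ) (s : Finset ι) (g : ι → DiffPoly N D) :
    totalDpow N D S (∑ i ∈ s, g i) = ∑ i ∈ s, totalDpow N D S (g i) :=
  map_sum (AddMonoidHom.mk' (totalDpow N D S) (totalDpow_add S)) g s

end Stmt16Aux

open Stmt16Aux in
theorem stmt16 (N D : ℕ) :
    (∀ (α : Fin N) (i : Fin D) (f : DiffPoly N D), varDer N D α (totalD N D i f) = 0) ∧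
    (∀ (α : Fin N) (f : DiffPoly N D) (h : Fin D → DiffPoly N D),
      varDer N D α (f + ∑ i, totalD N D i (h i)) = varDer N D α f) := by
  refine ⟨key, ?_⟩
  intro α f h
  classical
  set T : Finset (Fin D → ℕ) :=
    ((f + ∑ i, totalD N D i (h i)).vars.image Prod.snd) ∪ (f.vars.image Prod.snd) ∪
      Finset.univ.biUnion (fun i : Fin D => (totalD N D i (h i)).vars.image Prod.snd) with hT
  rw [varDer_subset α _ (T := T)
    (fun x hx => Finset.mem_union_left _ (Finset.mem_union_left _ hx)),
    varDer_subset α f (T := T)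
    (fun x hx => Finset.mem_union_left _ (Finset.mem_union_right _ hx))]
  have hterm : ∀ S ∈ T,
      ((-1 : ℝ) ^ (∑ j, S j)) •
          totalDpow N D S (pderiv ((α, S) : JetVar N D) (f + ∑ i, totalD N D i (h i)))
        = ((-1 : ℝ) ^ (∑ j, S j)) • totalDpow N D S (pderiv ((α, S) : JetVar N D) f)
          + ∑ i, ((-1 : ℝ) ^ (∑ j, S j)) •
              totalDpow N D S (pderiv ((α, S) : JetVar N D) (totalD N D i (h i))) := by
    intro S _
    rw [map_add, map_sum, totalDpow_add, totalDpow_sum, smul_add, Finset.smul_sum]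
  rw [Finset.sum_congr rfl hterm, Finset.sum_add_distrib]
  have hzero : ∑ S ∈ T, ∑ i, ((-1 : ℝ) ^ (∑ j, S j)) •
      totalDpow N D S (pderiv ((α, S) : JetVar N D) (totalD N D i (h i))) = 0 := by
    rw [Finset.sum_comm]
    apply Finset.sum_eq_zero
    intro i _
    have hsub : (totalD N D i (h i)).vars.image Prod.snd ⊆ T := by
      intro x hx
      exact Finset.mem_union_right _ (Finset.mem_biUnion.mpr ⟨i, Finset.mem_univ i, hx⟩)
    rw [← varDer_subset α _ hsub]
    exact key α i (h i)
  rw [hzero, add_zero]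

end
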